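/- SL(2,ℤ) admits the presentation ⟨a, b | aba = bab, (ababab)^2 = 1⟩, via a ↦ [[1,-1],[0,1]] and b ↦ [[1,0],[1,1]]. -/

import Mathlib

abbrev SL2Z := Matrix.SpecialLinearGroup (Fin 2) ℤ

def A : SL2Z := ⟨!![1, -1; 0, 1], by decide⟩
def B : SL2Z := ⟨!![1, 0; 1, 1], by decide⟩

/-- The relations `aba(bab)⁻¹` and `(ababab)²` in the free group on two generators. -/
def rels : Set (FreeGroup Bool) :=
  letI a := FreeGroup.of true
  letI b := FreeGroup.of false
  {a * b * a * (b * a * b)⁻¹, (a * b * a * b * a * b) ^ 2}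

/-! ### Auxiliary setup -/

open UpperHalfPlane Monoid

noncomputable section SL2ZAux

instance : DecidableEq SL2Z := fun x y => decidable_of_iff (x.1 = y.1) Subtype.ext_iff.symm

def U : SL2Z := ⟨!![0, -1; 1, 1], by decide⟩
def U2 : SL2Z := ⟨!![-1, -1; 1, 0], by decide⟩
def mOne : SL2Z := ⟨!![-1, 0; 0, -1], by decide⟩

/-! #### zmod homs -/

section zmodHom
variable {K : Type*} [Group K]

private lemma pow_mod_eq {g : K} {n : ℕ} (h : g ^ n = 1) (k : ℕ) : g ^ (k % n) = g ^ k := by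
  conv_rhs => rw [← Nat.mod_add_div k n]
  rw [pow_add, pow_mul, h, one_pow, mul_one]

def zmodHom (n : ℕ) [NeZero n] (g : K) (h : g ^ n = 1) : Multiplicative (ZMod n) →* K where
  toFun x := g ^ (Multiplicative.toAdd x).val
  map_one' := by simp
  map_mul' x y := by
    show g ^ (Multiplicative.toAdd x + Multiplicative.toAdd y).val = _
    rw [ZMod.val_add, pow_mod_eq h, pow_add]

end zmodHom

/-! #### Real part computations on the upper half plane -/

lemma smul_re' (g : SL2Z) (z : ℍ) :
    (g • z).re = ((((g 0 0 : ℤ) : ℂ) * z + ((g 0 1 : ℤ) : ℂ)) /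
      (((g 1 0 : ℤ) : ℂ) * z + ((g 1 1 : ℤ) : ℂ))).re := by
  rw [specialLinearGroup_apply]; simp

lemma U_re_neg (z : ℍ) (hz : 0 < z.re) : (U • z).re < 0 := by
  rw [smul_re']
  rw [show (U 0 0 : ℤ) = 0 from rfl, show (U 0 1 : ℤ) = -1 from rfl,
      show (U 1 0 : ℤ) = 1 from rfl, show (U 1 1 : ℤ) = 1 from rfl]
  push_cast
  have him : (0:ℝ) < z.im := z.2
  have hne : ((z:ℂ) + 1) ≠ 0 := by
    intro h
    have := congrArg Complex.im h
    simp at this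
    linarith
  have hnsq : 0 < Complex.normSq ((z:ℂ)+1) := Complex.normSq_pos.mpr hne
  rw [show (0:ℂ) * z + -1 = -1 by ring, show (1:ℂ) * z + 1 = z + 1 by ring]
  rw [Complex.div_re, ← add_div]
  apply div_neg_of_neg_of_pos _ hnsq
  simp only [Complex.add_re, Complex.add_im, Complex.one_re, Complex.one_im, Complex.neg_re,
    Complex.neg_im, UpperHalfPlane.coe_re, UpperHalfPlane.coe_im]
  nlinarith

lemma U2_re_neg (z : ℍ) (hz : 0 < z.re) : (U2 • z).re < 0 := by
  rw [smul_re']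
  rw [show (U2 0 0 : ℤ) = -1 from rfl, show (U2 0 1 : ℤ) = -1 from rfl,
      show (U2 1 0 : ℤ) = 1 from rfl, show (U2 1 1 : ℤ) = 0 from rfl]
  push_cast
  have him : (0:ℝ) < z.im := z.2
  have hnsq : 0 < Complex.normSq (z:ℂ) := Complex.normSq_pos.mpr (ne_zero z)
  rw [show (-1:ℂ) * z + -1 = -((z:ℂ)+1) by ring, show (1:ℂ) * z + 0 = (z:ℂ) by ring]
  rw [Complex.div_re, ← add_div]
  apply div_neg_of_neg_of_pos _ hnsq
  simp only [Complex.neg_re, Complex.neg_im, Complex.add_re, Complex.add_im, Complex.one_re,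
    Complex.one_im, UpperHalfPlane.coe_re, UpperHalfPlane.coe_im]
  nlinarith

lemma S_re_pos (z : ℍ) (hz : z.re < 0) : 0 < (ModularGroup.S • z).re := by
  rw [modular_S_smul]
  show (((-(z:ℂ)))⁻¹).re > 0
  rw [Complex.inv_re]
  have h1 : 0 < Complex.normSq (-(z:ℂ)) := by simpa using Complex.normSq_pos.mpr (ne_zero z)
  rw [show (-(z:ℂ)).re = -z.re by simp]
  exact div_pos (by linarith) h1

lemma mOne_smul (z : ℍ) : mOne • z = z := by
  rw [specialLinearGroup_apply]
  apply UpperHalfPlane.ext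
  show _ / _ = (z:ℂ)
  rw [show ((mOne 0 0 : ℤ)) = -1 from rfl, show ((mOne 0 1 : ℤ)) = 0 from rfl,
      show ((mOne 1 0 : ℤ)) = 0 from rfl, show ((mOne 1 1 : ℤ)) = -1 from rfl]
  push_cast
  ring_nf

def ρ : SL2Z →* Equiv.Perm ℍ := MulAction.toPermHom SL2Z ℍ

lemma rho_S_sq : (ρ ModularGroup.S) ^ 2 = 1 := by
  rw [← map_pow]
  apply Equiv.ext
  intro z
  show (ModularGroup.S ^ 2) • z = z
  rw [show ModularGroup.S ^ 2 = mOne by decide, mOne_smul]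

lemma rho_U_cube : (ρ U) ^ 3 = 1 := by
  rw [← map_pow]
  apply Equiv.ext
  intro z
  show (U ^ 3) • z = z
  rw [show U ^ 3 = mOne by decide, mOne_smul]

/-! #### The free product `C2 * C3` and the ping-pong argument -/

def Hfam : Bool → Type := fun i => Multiplicative (ZMod (cond i 2 3))

instance (i : Bool) : NeZero (cond i 2 3) := by cases i <;> exact ⟨by norm_num⟩
instance (i : Bool) : Group (Hfam i) := by
  cases i
  · exact (inferInstance : Group (Multiplicative (ZMod 3)))
  · exact (inferInstance : Group (Multiplicative (ZMod 2)))
instance (i : Bool) : Fintype (Hfam i) := by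
  cases i
  · exact (inferInstance : Fintype (Multiplicative (ZMod 3)))
  · exact (inferInstance : Fintype (Multiplicative (ZMod 2)))
instance (i : Bool) : DecidableEq (Hfam i) := by
  cases i
  · exact (inferInstance : DecidableEq (Multiplicative (ZMod 3)))
  · exact (inferInstance : DecidableEq (Multiplicative (ZMod 2)))

def fping : ∀ i : Bool, Hfam i →* Equiv.Perm ℍ := fun i => by
  cases i
  · exact (zmodHom 3 (ρ U) rho_U_cube : Multiplicative (ZMod 3) →* _)
  · exact (zmodHom 2 (ρ ModularGroup.S) rho_S_sq : Multiplicative (ZMod 2) →* _)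

def Xping : Bool → Set ℍ := fun i => cond i {z | 0 < z.re} {z | z.re < 0}

def θ : Monoid.CoprodI Hfam →* Equiv.Perm ℍ := Monoid.CoprodI.lift fping

lemma hcard3 : (3 : Cardinal) ≤ Cardinal.mk (Hfam false) := by
  rw [Cardinal.mk_fintype]
  rw [show Fintype.card (Hfam false) = 3 from rfl]
  norm_num

lemma theta_injective : Function.Injective θ := by
  unfold θ
  apply Monoid.CoprodI.lift_injective_of_ping_pong fping (Or.inr ⟨false, hcard3⟩) Xping
  · -- nonempty
    intro i
    cases i
    · refine ⟨⟨-1 + Complex.I, by simp⟩, ?_⟩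
      show ((-1 + Complex.I : ℂ)).re < 0
      norm_num
    · refine ⟨⟨1 + Complex.I, by simp⟩, ?_⟩
      show (0:ℝ) < ((1 + Complex.I : ℂ)).re
      norm_num
  · -- disjoint
    intro i j hij
    have key : ∀ z : ℍ, z ∈ Xping true → z ∈ Xping false → False := by
      intro z h1 h2
      have h1' : 0 < z.re := h1
      have h2' : z.re < 0 := h2
      linarith
    cases i <;> cases j
    · exact absurd rfl hij
    · rw [Function.onFun, Set.disjoint_left]
      intro z hz hz'
      exact key z hz' hz
    · rw [Function.onFun, Set.disjoint_left]
      intro z hz hz'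
      exact key z hz hz'
    · exact absurd rfl hij
  · -- ping pong
    intro i j hij h hne w hw
    rw [Set.mem_smul_set] at hw
    obtain ⟨y, hy, rfl⟩ := hw
    cases i
    · cases j
      · exact absurd rfl hij
      have hy' : 0 < y.re := hy
      have hcases : h = 1 ∨ h = (Multiplicative.ofAdd (1 : ZMod 3) : Multiplicative (ZMod 3)) ∨
          h = (Multiplicative.ofAdd (2 : ZMod 3) : Multiplicative (ZMod 3)) := by
        revert h
        exact (by decide : ∀ h : Multiplicative (ZMod 3), h ≠ 1 → h = 1 ∨ h = Multiplicative.ofAdd 1 ∨ h = Multiplicative.ofAdd 2)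
      rcases hcases with rfl | rfl | rfl
      · exact absurd rfl hne
      · show ((fping false (Multiplicative.ofAdd (1 : ZMod 3))) y).re < 0
        have he : (fping false (Multiplicative.ofAdd (1 : ZMod 3))) = ρ U := by
          show (ρ U) ^ ((1 : ZMod 3)).val = ρ U
          rw [show ((1 : ZMod 3)).val = 1 by decide, pow_one]
        rw [he]
        exact U_re_neg y hy'
      · show ((fping false (Multiplicative.ofAdd (2 : ZMod 3))) y).re < 0
        have he : (fping false (Multiplicative.ofAdd (2 : ZMod 3))) = ρ U ^ 2 := by
          show (ρ U) ^ ((2 : ZMod 3)).val = ρ U ^ 2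
          rw [show ((2 : ZMod 3)).val = 2 by decide]
        rw [he]
        have hUU : (ρ U ^ 2) y = U2 • y := by
          show (ρ U) ((ρ U) y) = _
          show U • U • y = U2 • y
          rw [← mul_smul, show U * U = U2 by decide]
        rw [hUU]
        exact U2_re_neg y hy'
    · cases j
      swap
      · exact absurd rfl hij
      have hy' : y.re < 0 := hy
      have hcases : h = 1 ∨ h = (Multiplicative.ofAdd (1 : ZMod 2) : Multiplicative (ZMod 2)) := by
        revert h
        exact (by decide : ∀ h : Multiplicative (ZMod 2), h ≠ 1 → h = 1 ∨ h = Multiplicative.ofAdd 1)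
      rcases hcases with rfl | rfl
      · exact absurd rfl hne
      show (0:ℝ) < ((fping true (Multiplicative.ofAdd (1 : ZMod 2))) y).re
      have he : (fping true (Multiplicative.ofAdd (1 : ZMod 2))) = ρ ModularGroup.S := by
        show (ρ ModularGroup.S) ^ ((1 : ZMod 2)).val = ρ ModularGroup.S
        rw [show ((1 : ZMod 2)).val = 1 by decide, pow_one]
      rw [he]
      exact S_re_pos y hy'

/-! #### Relations hold for any pair `(σ, υ)` with `σ² = υ³ = 1`, via `a = υ⁻¹σ`, `b = σ⁻¹υ²` -/

lemma rels_hold {K : Type*} [Group K] (σ υ : K) (h2 : σ ^ 2 = 1) (h3 : υ ^ 3 = 1) :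
    (υ⁻¹ * σ) * (σ⁻¹ * υ ^ 2) * (υ⁻¹ * σ) * ((σ⁻¹ * υ ^ 2) * (υ⁻¹ * σ) * (σ⁻¹ * υ ^ 2))⁻¹ = 1 ∧
    ((υ⁻¹ * σ) * (σ⁻¹ * υ ^ 2) * (υ⁻¹ * σ) * (σ⁻¹ * υ ^ 2) * (υ⁻¹ * σ) * (σ⁻¹ * υ ^ 2)) ^ 2
      = 1 := by
  have haba : (υ⁻¹ * σ) * (σ⁻¹ * υ ^ 2) * (υ⁻¹ * σ) = σ := by group
  have hbab : (σ⁻¹ * υ ^ 2) * (υ⁻¹ * σ) * (σ⁻¹ * υ ^ 2) = σ⁻¹ * υ ^ 3 := by group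
  have h6 : (υ⁻¹ * σ) * (σ⁻¹ * υ ^ 2) * (υ⁻¹ * σ) * (σ⁻¹ * υ ^ 2) * (υ⁻¹ * σ) * (σ⁻¹ * υ ^ 2)
      = υ ^ 3 := by group
  constructor
  · rw [haba, hbab, h3, mul_one, inv_inv, ← pow_two, h2]
  · rw [h6, h3, one_pow]

/-! #### The presented group -/

abbrev Gp := PresentedGroup rels
def ga : Gp := PresentedGroup.of true
def gb : Gp := PresentedGroup.of false

lemma rels_eq_one {r : FreeGroup Bool} (hr : r ∈ rels) : PresentedGroup.mk rels r = 1 :=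
  (QuotientGroup.eq_one_iff _).mpr (Subgroup.subset_normalClosure hr)

lemma grel1 : ga * gb * ga = gb * ga * gb := by
  have h := rels_eq_one (show (FreeGroup.of true * FreeGroup.of false * FreeGroup.of true *
      (FreeGroup.of false * FreeGroup.of true * FreeGroup.of false)⁻¹) ∈ rels by left; rfl)
  simp only [map_mul, map_inv] at h
  rw [mul_inv_eq_one] at h
  exact h

lemma grel2 : (ga * gb * ga * gb * ga * gb) ^ 2 = 1 := by
  have h := rels_eq_one (show ((FreeGroup.of true * FreeGroup.of false * FreeGroup.of true *
      FreeGroup.of false * FreeGroup.of true * FreeGroup.of false) ^ 2) ∈ rels by right; rfl)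
  simp only [map_mul, map_pow] at h
  exact h

def zc : Gp := (ga * gb * ga) ^ 2

lemma hz3 : (ga * gb) ^ 3 = zc := by
  have e1 : (ga * gb) ^ 3 = ga * gb * (ga * gb) * (ga * gb) := by
    rw [pow_succ, pow_succ, pow_one]
  have e2 : zc = ga * gb * ga * (ga * gb * ga) := by
    show (ga * gb * ga) ^ 2 = _
    rw [pow_two]
  have e3 : ga * gb * (ga * gb) * (ga * gb) = ga * gb * ga * (gb * ga * gb) := by group
  rw [e1, e2, e3, ← grel1]

lemma hz2 : zc ^ 2 = 1 := by
  have h6 : ga * gb * ga * gb * ga * gb = (ga * gb) ^ 3 := by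
    rw [pow_succ, pow_succ, pow_one]
    group
  have h := grel2
  rw [h6, hz3] at h
  exact h

lemma z_comm : ∀ g : Gp, Commute zc g := by
  have hzu : Commute zc (ga * gb) := by
    rw [← hz3]; exact (Commute.refl _).pow_left 3
  have hzs : Commute zc (ga * gb * ga) := (Commute.refl _).pow_left 2
  have hza : Commute zc ga := by
    have h : ga = (ga * gb)⁻¹ * (ga * gb * ga) := by group
    rw [h]
    exact hzu.inv_right.mul_right hzs
  have hzb : Commute zc gb := by
    have h : gb = (ga * gb * ga)⁻¹ * (ga * gb * (ga * gb)) := by group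
    rw [h]
    exact hzs.inv_right.mul_right (hzu.mul_right hzu)
  intro g
  have hg : g ∈ Subgroup.centralizer {zc} := by
    apply PresentedGroup.generated_by
    intro j
    rw [Subgroup.mem_centralizer_iff]
    intro h hh
    rw [Set.mem_singleton_iff] at hh
    subst hh
    cases j
    · exact hzb.eq
    · exact hza.eq
  exact Subgroup.mem_centralizer_iff.mp hg zc (Set.mem_singleton _)

def Nz : Subgroup Gp := Subgroup.zpowers zc

instance Nz_normal : Nz.Normal := by
  constructor
  intro n hn g
  obtain ⟨k, hk⟩ := hn
  have hc : zc ^ k * g = g * zc ^ k := ((z_comm g).zpow_left k).eq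
  refine ⟨k, ?_⟩
  show zc ^ k = g * n * g⁻¹
  rw [← hk, ← hc, mul_inv_cancel_right]

/-! #### The map `φ : Gp →* SL2Z` -/

lemma phi_rels : ∀ r ∈ rels, FreeGroup.lift (fun x => cond x A B) r = 1 := by
  intro r hr
  have hr' : r = FreeGroup.of true * FreeGroup.of false * FreeGroup.of true *
        (FreeGroup.of false * FreeGroup.of true * FreeGroup.of false)⁻¹ ∨
      r = (FreeGroup.of true * FreeGroup.of false * FreeGroup.of true *
        FreeGroup.of false * FreeGroup.of true * FreeGroup.of false) ^ 2 := hr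
  rcases hr' with rfl | rfl
  · simp only [map_mul, map_inv, FreeGroup.lift_apply_of]
    show A * B * A * (B * A * B)⁻¹ = 1
    decide
  · simp only [map_pow, map_mul, FreeGroup.lift_apply_of]
    show (A * B * A * B * A * B) ^ 2 = 1
    decide

def φ : Gp →* SL2Z := PresentedGroup.toGroup phi_rels

lemma phi_a : φ ga = A := PresentedGroup.toGroup.of phi_rels
lemma phi_b : φ gb = B := PresentedGroup.toGroup.of phi_rels

/-! #### The map `χ : Gp →* CoprodI Hfam` -/

def σc : Monoid.CoprodI Hfam :=
  Monoid.CoprodI.of (i := true) (show Hfam true from Multiplicative.ofAdd (1 : ZMod 2))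
def υc : Monoid.CoprodI Hfam :=
  Monoid.CoprodI.of (i := false) (show Hfam false from Multiplicative.ofAdd (1 : ZMod 3))

lemma sigma_sq : σc ^ 2 = 1 := by
  rw [σc, ← map_pow]
  rw [show (show Hfam true from Multiplicative.ofAdd (1 : ZMod 2)) ^ 2 = 1 by decide]
  exact map_one _

lemma upsilon_cube : υc ^ 3 = 1 := by
  rw [υc, ← map_pow]
  rw [show (show Hfam false from Multiplicative.ofAdd (1 : ZMod 3)) ^ 3 = 1 by decide]
  exact map_one _

lemma chi_rels : ∀ r ∈ rels,
    FreeGroup.lift (fun x => cond x (υc⁻¹ * σc) (σc⁻¹ * υc ^ 2)) r = 1 := by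
  intro r hr
  have hr' : r = FreeGroup.of true * FreeGroup.of false * FreeGroup.of true *
        (FreeGroup.of false * FreeGroup.of true * FreeGroup.of false)⁻¹ ∨
      r = (FreeGroup.of true * FreeGroup.of false * FreeGroup.of true *
        FreeGroup.of false * FreeGroup.of true * FreeGroup.of false) ^ 2 := hr
  rcases hr' with rfl | rfl
  · simp only [map_mul, map_inv, FreeGroup.lift_apply_of]
    exact (rels_hold σc υc sigma_sq upsilon_cube).1
  · simp only [map_pow, map_mul, FreeGroup.lift_apply_of]
    exact (rels_hold σc υc sigma_sq upsilon_cube).2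

def χ : Gp →* Monoid.CoprodI Hfam := PresentedGroup.toGroup chi_rels

lemma chi_a : χ ga = υc⁻¹ * σc := PresentedGroup.toGroup.of chi_rels
lemma chi_b : χ gb = σc⁻¹ * υc ^ 2 := PresentedGroup.toGroup.of chi_rels

/-! #### The map `rQ : CoprodI Hfam →* Gp ⧸ Nz` -/

def sbar : Gp ⧸ Nz := QuotientGroup.mk' Nz (ga * gb * ga)
def ubar : Gp ⧸ Nz := QuotientGroup.mk' Nz (ga * gb)

lemma sbar_sq : sbar ^ 2 = 1 := by
  rw [sbar, ← map_pow]
  apply (QuotientGroup.eq_one_iff _).mpr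
  exact ⟨1, by show zc ^ (1:ℤ) = _; rw [zpow_one]; rfl⟩

lemma ubar_cube : ubar ^ 3 = 1 := by
  rw [ubar, ← map_pow]
  apply (QuotientGroup.eq_one_iff _).mpr
  exact ⟨1, by show zc ^ (1:ℤ) = _; rw [zpow_one, ← hz3]⟩

def frQ : ∀ i : Bool, Hfam i →* Gp ⧸ Nz := fun i => by
  cases i
  · exact (zmodHom 3 ubar ubar_cube : Multiplicative (ZMod 3) →* _)
  · exact (zmodHom 2 sbar sbar_sq : Multiplicative (ZMod 2) →* _)

def rQ : Monoid.CoprodI Hfam →* Gp ⧸ Nz := Monoid.CoprodI.lift frQ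

lemma rQ_sigma : rQ σc = sbar := by
  rw [σc, rQ, Monoid.CoprodI.lift_of]
  show sbar ^ ((1 : ZMod 2)).val = sbar
  rw [show ((1 : ZMod 2)).val = 1 by decide, pow_one]

lemma rQ_upsilon : rQ υc = ubar := by
  rw [υc, rQ, Monoid.CoprodI.lift_of]
  show ubar ^ ((1 : ZMod 3)).val = ubar
  rw [show ((1 : ZMod 3)).val = 1 by decide, pow_one]

lemma theta_sigma : θ σc = ρ ModularGroup.S := by
  rw [σc, θ, Monoid.CoprodI.lift_of]
  show (ρ ModularGroup.S) ^ ((1 : ZMod 2)).val = ρ ModularGroup.S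
  rw [show ((1 : ZMod 2)).val = 1 by decide, pow_one]

lemma theta_upsilon : θ υc = ρ U := by
  rw [υc, θ, Monoid.CoprodI.lift_of]
  show (ρ U) ^ ((1 : ZMod 3)).val = ρ U
  rw [show ((1 : ZMod 3)).val = 1 by decide, pow_one]

/-! #### Compatibilities -/

lemma rQ_chi : rQ.comp χ = QuotientGroup.mk' Nz := by
  apply PresentedGroup.ext
  intro x
  cases x
  · show rQ (χ gb) = QuotientGroup.mk' Nz gb
    rw [chi_b, map_mul, map_inv, map_pow, rQ_sigma, rQ_upsilon, sbar, ubar,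
      ← map_inv, ← map_pow, ← map_mul]
    congr 1
    rw [pow_two]
    group
  · show rQ (χ ga) = QuotientGroup.mk' Nz ga
    rw [chi_a, map_mul, map_inv, rQ_sigma, rQ_upsilon, sbar, ubar, ← map_inv, ← map_mul]
    congr 1
    group

lemma theta_chi : θ.comp χ = ρ.comp φ := by
  apply PresentedGroup.ext
  intro x
  cases x
  · show θ (χ gb) = ρ (φ gb)
    rw [chi_b, phi_b, map_mul, map_inv, map_pow, theta_sigma, theta_upsilon,
      ← map_inv, ← map_pow, ← map_mul]
    rw [show ModularGroup.S⁻¹ * U ^ 2 = B by decide]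
  · show θ (χ ga) = ρ (φ ga)
    rw [chi_a, phi_a, map_mul, map_inv, theta_sigma, theta_upsilon, ← map_inv, ← map_mul]
    rw [show U⁻¹ * ModularGroup.S = A by decide]

/-! #### Injectivity -/

lemma phi_z : φ zc = mOne := by
  show φ ((ga * gb * ga) ^ 2) = mOne
  rw [map_pow, map_mul, map_mul, phi_a, phi_b]
  decide

lemma phi_injective : Function.Injective φ := by
  rw [injective_iff_map_eq_one]
  intro g hg
  have h1 : θ (χ g) = 1 := by
    have := DFunLike.congr_fun theta_chi g
    simp only [MonoidHom.comp_apply] at this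
    rw [this, hg, map_one]
  have h2 : χ g = 1 := theta_injective (by rw [h1, map_one])
  have h3 : QuotientGroup.mk' Nz g = 1 := by
    have := DFunLike.congr_fun rQ_chi g
    simp only [MonoidHom.comp_apply] at this
    rw [← this, h2, map_one]
  have h4 : g ∈ Nz := (QuotientGroup.eq_one_iff g).mp h3
  obtain ⟨k, hk⟩ := h4
  simp only at hk
  rcases Int.even_or_odd k with ⟨m, hm⟩ | ⟨m, hm⟩
  · rw [← hk, hm, ← two_mul, zpow_mul, show (2:ℤ) = (2:ℕ) by norm_num, zpow_natCast, hz2,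
      one_zpow]
  · exfalso
    have hzg : g = zc := by
      rw [← hk, hm, zpow_add, zpow_one, zpow_mul,
        show (2:ℤ) = (2:ℕ) by norm_num, zpow_natCast, hz2, one_zpow, one_mul]
    rw [hzg, phi_z] at hg
    exact absurd hg (by decide)

/-! #### Surjectivity -/

def CL : Subgroup SL2Z := Subgroup.closure {A, B}

lemma A_mem : A ∈ CL := Subgroup.subset_closure (by simp)
lemma B_mem : B ∈ CL := Subgroup.subset_closure (by simp)
lemma S_mem : ModularGroup.S ∈ CL := by
  rw [show ModularGroup.S = A * B * A by decide]
  exact mul_mem (mul_mem A_mem B_mem) A_mem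
lemma T_mem : ModularGroup.T ∈ CL := by
  rw [show ModularGroup.T = A⁻¹ by decide]
  exact inv_mem A_mem
lemma mOne_mem : mOne ∈ CL := by
  rw [show mOne = ModularGroup.S ^ 2 by decide]
  exact pow_mem S_mem 2

lemma all_mem : ∀ n : ℕ, ∀ M : SL2Z, (M 1 0).natAbs = n → M ∈ CL := by
  intro n
  induction n using Nat.strong_induction_on with
  | _ n ih =>
    intro M hM
    by_cases hc : M 1 0 = 0
    · have hdet : M 0 0 * M 1 1 - M 0 1 * M 1 0 = 1 := by
        rw [← Matrix.det_fin_two]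
        exact M.2
      rw [hc, mul_zero, sub_zero] at hdet
      rcases Int.mul_eq_one_iff_eq_one_or_neg_one.mp hdet with ⟨ha, hd⟩ | ⟨ha, hd⟩
      · have : M = ModularGroup.T ^ (M 0 1) := by
          apply Subtype.ext
          rw [ModularGroup.coe_T_zpow]
          conv_lhs => rw [Matrix.eta_fin_two (M : Matrix (Fin 2) (Fin 2) ℤ)]
          rw [ha, hc, hd]
        rw [this]
        exact zpow_mem T_mem _
      · have : M = mOne * ModularGroup.T ^ (-(M 0 1)) := by
          apply Subtype.ext
          rw [Matrix.SpecialLinearGroup.coe_mul, ModularGroup.coe_T_zpow,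
            show (mOne : Matrix (Fin 2) (Fin 2) ℤ) = !![-1,0;0,-1] from rfl]
          conv_lhs => rw [Matrix.eta_fin_two (M : Matrix (Fin 2) (Fin 2) ℤ)]
          rw [ha, hc, hd, Matrix.mul_fin_two]
          norm_num
        rw [this]
        exact mul_mem mOne_mem (zpow_mem T_mem _)
    · set q := M 0 0 / M 1 0 with hq
      set N' := ModularGroup.S * ModularGroup.T ^ (-q) * M with hN'
      have hN'c : N' 1 0 = M 0 0 % M 1 0 := by
        show ((N' : Matrix (Fin 2) (Fin 2) ℤ)) 1 0 = _
        rw [hN', Matrix.SpecialLinearGroup.coe_mul, Matrix.SpecialLinearGroup.coe_mul,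
          ModularGroup.coe_T_zpow, ModularGroup.coe_S]
        simp [Matrix.mul_apply, Fin.sum_univ_two]
        rw [Int.emod_def]
        ring
      have hlt : (N' 1 0).natAbs < n := by
        rw [hN'c, ← hM]
        have h1 : 0 ≤ M 0 0 % M 1 0 := Int.emod_nonneg _ hc
        have h2 : M 0 0 % M 1 0 < |M 1 0| := Int.emod_lt_abs _ hc
        have := Int.natAbs_lt_natAbs_of_nonneg_of_lt h1 h2
        rwa [Int.natAbs_abs] at this
      have hN'mem : N' ∈ CL := ih _ hlt N' rfl
      have : M = ModularGroup.T ^ q * ModularGroup.S⁻¹ * N' := by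
        rw [hN']
        group
      rw [this]
      exact mul_mem (mul_mem (zpow_mem T_mem q) (inv_mem S_mem)) hN'mem

lemma phi_surjective : Function.Surjective φ := by
  intro y
  have hy : y ∈ CL := all_mem _ y rfl
  have hle : CL ≤ φ.range := by
    apply (Subgroup.closure_le _).mpr
    intro x hx
    rcases hx with rfl | hx
    · exact ⟨ga, phi_a⟩
    · rw [Set.mem_singleton_iff] at hx
      subst hx
      exact ⟨gb, phi_b⟩
  exact hle hy

end SL2ZAux

theorem stmt3 :
    ∃ e : PresentedGroup rels ≃* SL2Z,
      e (PresentedGroup.of true) = A ∧ e (PresentedGroup.of false) = B := by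
  refine ⟨MulEquiv.ofBijective φ ⟨phi_injective, phi_surjective⟩, ?_, ?_⟩
  · exact phi_a
  · exact phi_b
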